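/- Let S be a finite set, a ≥ 1, C an ∞-category with finite colimits, and X : [a]^S → C a diagram. The following are equivalent: (1) X is left Kan extended from the full subposet of functions supported on at most one element of S; (2) for each collection of strictly monotone maps f_s : [1] → [a] with f_s(0) = 0 for all s ∈ S, the restricted cube [1]^S → [a]^S → C is strongly cocartesian; (3) for each collection of strictly monotone maps f_s : [1] → [a] (no basepoint condition), the restricted cube [1]^S → [a]^S → C is strongly cocartesian. -/

import Mathlib

open CategoryTheory Limits

universe v u

/-- A two-element poset `{0,1}` (a copy of `Bool`). -/
def Two : Type := Bool

instance : BooleanAlgebra Two := inferInstanceAs (BooleanAlgebra Bool)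
instance : DecidableEq Two := inferInstanceAs (DecidableEq Bool)

/-- The linearly ordered set `[a] = {0, …, a}` (a copy of `Fin (a+1)`). -/
def Vert (a : ℕ) : Type := Fin (a + 1)

instance (a : ℕ) : LinearOrder (Vert a) := inferInstanceAs (LinearOrder (Fin (a + 1)))
instance (a : ℕ) : Zero (Vert a) := inferInstanceAs (Zero (Fin (a + 1)))
instance (a : ℕ) : DecidableEq (Vert a) := inferInstanceAs (DecidableEq (Fin (a + 1)))

attribute [local instance 2000] Preorder.smallCategory

variable {C : Type u} [Category.{v} C]

lemma le_update_true {S : Type} [DecidableEq S] (u : S → Two) (s : S) :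
    u ≤ Function.update u s ⊤ := by
  intro x
  by_cases h : x = s
  · subst h; simp
  · simp [Function.update_of_ne h]

lemma update_true_le_update_true {S : Type} [DecidableEq S] (u v : S → Two) (huv : u ≤ v)
    (s : S) : Function.update u s ⊤ ≤ Function.update v s ⊤ := by
  intro x
  by_cases h : x = s
  · subst h; simp
  · simpa [Function.update_of_ne h] using huv x

/-- A cube `G : (S → Two) ⥤ C` is strongly cocartesian if all of its 2-dimensional faces
are pushout squares. -/
def IsStronglyCocartesianCube {S : Type} [DecidableEq S] (G : (S → Two) ⥤ C) : Prop :=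
  ∀ (u : S → Two) (s t : S), s ≠ t → u s = ⊥ → u t = ⊥ →
    IsPushout (G.map (homOfLE (le_update_true u s)))
      (G.map (homOfLE (le_update_true u t)))
      (G.map (homOfLE (le_update_true (Function.update u s ⊤) t)))
      (G.map (homOfLE
        (update_true_le_update_true u (Function.update u s ⊤) (le_update_true u s) t)))

/-- Selection map: restrict a cube of sidelength `a` along the monotone maps
`[1] → [a]` sending `0 ↦ x s` and `1 ↦ y s` in each coordinate. -/
def selMap {S : Type} {a : ℕ} (x y : S → Vert a) (v : S → Two) : S → Vert a :=
  fun s => if v s = ⊤ then y s else x s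

lemma selMap_monotone {S : Type} {a : ℕ} (x y : S → Vert a) (h : ∀ s, x s ≤ y s) :
    Monotone (selMap x y) := by
  intro v w hvw s
  dsimp [selMap]
  by_cases hv : v s = ⊤
  · have hw : w s = ⊤ := top_le_iff.mp (hv ▸ hvw s)
    simp [hv, hw]
  · by_cases hw : w s = ⊤ <;> simp [hv, hw, h s]

/-- The cube of sidelength 1 obtained from `X : [a]^S → C` by restricting along the strictly
monotone maps `[1] → [a]`, `0 ↦ x s`, `1 ↦ y s`. -/
def restrictedCube {S : Type} {a : ℕ} (X : (S → Vert a) ⥤ C) (x y : S → Vert a)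
    (h : ∀ s, x s ≤ y s) : (S → Two) ⥤ C :=
  (selMap_monotone x y h).functor ⋙ X

/-! ### Auxiliary material -/

namespace Stmt11Aux
set_option linter.unusedSectionVars false
set_option linter.unusedVariables false

variable {S : Type} [Fintype S] [DecidableEq S] {a : ℕ}

lemma vzero_le (x : Vert a) : 0 ≤ x := Fin.zero_le (show Fin (a+1) from x)

lemma vpos {x : Vert a} (h : x ≠ 0) : 0 < x := (vzero_le x).lt_of_ne (Ne.symm h)

lemma vle_zero {x : Vert a} (h : x ≤ (0 : Vert a)) : x = 0 := le_antisymm h (vzero_le x)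

lemma two_ne_top_of_bot {v : Two} (h : v = ⊥) : ¬ (v = ⊤) := by
  subst h; decide

variable (X : (S → Vert a) ⥤ C)

lemma map_comp' {A B D : S → Vert a} (h1 : A ≤ B) (h2 : B ≤ D) :
    X.map (homOfLE h1) ≫ X.map (homOfLE h2) = X.map (homOfLE (h1.trans h2)) := by
  rw [← X.map_comp]
  rfl

lemma map_sq {A B D E : S → Vert a} (h1 : A ≤ B) (h2 : B ≤ E) (h3 : A ≤ D) (h4 : D ≤ E) :
    X.map (homOfLE h1) ≫ X.map (homOfLE h2) = X.map (homOfLE h3) ≫ X.map (homOfLE h4) := by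
  rw [map_comp', map_comp']

lemma pushout_ext {A B D E A' B' D' E' : S → Vert a}
    (hA : A = A') (hB : B = B') (hD : D = D') (hE : E = E')
    {l1 : A ≤ B} {l2 : A ≤ D} {l3 : B ≤ E} {l4 : D ≤ E}
    {l1' : A' ≤ B'} {l2' : A' ≤ D'} {l3' : B' ≤ E'} {l4' : D' ≤ E'}
    (h : IsPushout (X.map (homOfLE l1)) (X.map (homOfLE l2)) (X.map (homOfLE l3))
      (X.map (homOfLE l4))) :
    IsPushout (X.map (homOfLE l1')) (X.map (homOfLE l2')) (X.map (homOfLE l3'))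
      (X.map (homOfLE l4')) := by
  subst hA hB hD hE
  exact h

lemma isIso_map {A B : S → Vert a} (h : A ≤ B) (h' : B ≤ A) : IsIso (X.map (homOfLE h)) := by
  have : IsIso (homOfLE h) := ⟨homOfLE h', Subsingleton.elim _ _, Subsingleton.elim _ _⟩
  infer_instance

/-! ### Squares -/

def vv (c : S → Vert a) (s t : S) (i j : Vert a) : S → Vert a :=
  Function.update (Function.update c s i) t j

lemma vv_app_s {c : S → Vert a} {s t : S} (hst : s ≠ t) (i j : Vert a) : vv c s t i j s = i := by
  rw [vv, Function.update_of_ne hst, Function.update_self]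

lemma vv_app_t (c : S → Vert a) (s t : S) (i j : Vert a) : vv c s t i j t = j := by
  rw [vv, Function.update_self]

lemma vv_app {c : S → Vert a} {s t r : S} (hrs : r ≠ s) (hrt : r ≠ t) (i j : Vert a) :
    vv c s t i j r = c r := by
  rw [vv, Function.update_of_ne hrt, Function.update_of_ne hrs]

lemma vv_le {c : S → Vert a} {s t : S} (hst : s ≠ t) {i i' j j' : Vert a}
    (hi : i ≤ i') (hj : j ≤ j') : vv c s t i j ≤ vv c s t i' j' := by
  intro r
  by_cases hrt : r = t
  · subst hrt; rw [vv_app_t, vv_app_t]; exact hj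
  · by_cases hrs : r = s
    · subst hrs; rw [vv_app_s hst, vv_app_s hst]; exact hi
    · rw [vv_app hrs hrt, vv_app hrs hrt]

def QSq (c : S → Vert a) (s t : S) (i p j q : Vert a) : Prop :=
  ∀ (h1 : vv c s t i j ≤ vv c s t p j) (h2 : vv c s t i j ≤ vv c s t i q)
    (h3 : vv c s t p j ≤ vv c s t p q) (h4 : vv c s t i q ≤ vv c s t p q),
    IsPushout (X.map (homOfLE h1)) (X.map (homOfLE h2)) (X.map (homOfLE h3))
      (X.map (homOfLE h4))

def Sq0 : Prop := ∀ (c : S → Vert a) (s t : S), s ≠ t →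
  ∀ p q : Vert a, 0 < p → 0 < q → QSq X c s t 0 p 0 q

def SqA : Prop := ∀ (c : S → Vert a) (s t : S), s ≠ t →
  ∀ i p j q : Vert a, i < p → j < q → QSq X c s t i p j q

/-- Degenerate square in the `t`-direction. -/
lemma qsq_degen_t (c : S → Vert a) (s t : S) (hst : s ≠ t) (i p : Vert a) (hjq : (0:Vert a) = 0) :
    QSq X c s t i p 0 0 := by
  intro h1 h2 h3 h4
  haveI : IsIso (X.map (homOfLE h2)) := isIso_map X h2 (le_refl _)
  haveI : IsIso (X.map (homOfLE h3)) := isIso_map X h3 (le_refl _)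
  exact IsPushout.of_vert_isIso ⟨map_sq X h1 h3 h2 h4⟩

lemma claim1 (hS : Sq0 X) (c : S → Vert a) (s t : S) (hst : s ≠ t)
    (p j q : Vert a) (hp : 0 < p) (hjq : j ≤ q) : QSq X c s t 0 p j q := by
  by_cases hj : j = 0
  · subst hj
    by_cases hq : q = 0
    · subst hq; exact qsq_degen_t X c s t hst 0 p rfl
    · exact hS c s t hst p q hp (vpos hq)
  · intro h1 h2 h3 h4
    have hj0 : (0:Vert a) < j := vpos hj
    have hq0 : (0:Vert a) < q := lt_of_lt_of_le hj0 hjq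
    have A := hS c s t hst p j hp hj0 (vv_le hst hp.le le_rfl) (vv_le hst le_rfl hj0.le)
      (vv_le hst le_rfl hj0.le) (vv_le hst hp.le le_rfl)
    have la : vv c s t 0 0 ≤ vv c s t 0 j := vv_le hst le_rfl hj0.le
    have lb : vv c s t 0 j ≤ vv c s t 0 q := vv_le hst le_rfl hjq
    have lc : vv c s t p 0 ≤ vv c s t p j := vv_le hst le_rfl hj0.le
    have ld : vv c s t p j ≤ vv c s t p q := vv_le hst le_rfl hjq
    have big : IsPushout (X.map (homOfLE (vv_le hst hp.le le_rfl : vv c s t 0 0 ≤ vv c s t p 0)))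
        (X.map (homOfLE la) ≫ X.map (homOfLE lb))
        (X.map (homOfLE lc) ≫ X.map (homOfLE ld))
        (X.map (homOfLE h4)) := by
      rw [map_comp', map_comp']
      exact hS c s t hst p q hp hq0 _ _ _ _
    exact big.of_top (map_sq X h1 h3 h2 h4) A

lemma sq0_to_sqA (hS : Sq0 X) : SqA X := by
  intro c s t hst i p j q hip hjq
  by_cases hi : i = 0
  · subst hi; exact claim1 X hS c s t hst p j q hip hjq.le
  · intro h1 h2 h3 h4
    have hi0 : (0:Vert a) < i := vpos hi
    have hp0 : (0:Vert a) < p := lt_of_lt_of_le hi0 hip.le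
    have A := claim1 X hS c s t hst i j q hi0 hjq.le (vv_le hst hi0.le le_rfl)
      (vv_le hst le_rfl hjq.le) (vv_le hst le_rfl hjq.le) (vv_le hst hi0.le le_rfl)
    have la : vv c s t 0 j ≤ vv c s t i j := vv_le hst hi0.le le_rfl
    have lb : vv c s t i j ≤ vv c s t p j := vv_le hst hip.le le_rfl
    have lc : vv c s t 0 q ≤ vv c s t i q := vv_le hst hi0.le le_rfl
    have ld : vv c s t i q ≤ vv c s t p q := vv_le hst hip.le le_rfl
    have big : IsPushout (X.map (homOfLE la) ≫ X.map (homOfLE lb))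
        (X.map (homOfLE (vv_le hst le_rfl hjq.le : vv c s t 0 j ≤ vv c s t 0 q)))
        (X.map (homOfLE h3))
        (X.map (homOfLE lc) ≫ X.map (homOfLE ld)) := by
      rw [map_comp', map_comp']
      exact claim1 X hS c s t hst p j q hp0 hjq.le _ _ _ _
    exact big.of_left (map_sq X h1 h3 h2 h4) A

/-! ### Interface between cubes and squares -/

section SelEq

variable (x y : S → Vert a) (u : S → Two) {s t : S}

lemma sel_eq₀ (hst : s ≠ t) (hus : u s = ⊥) (hut : u t = ⊥) :
    selMap x y u = vv (selMap x y u) s t (x s) (x t) := by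
  funext r
  by_cases hrt : r = t
  · subst hrt; rw [vv_app_t, selMap, if_neg (two_ne_top_of_bot hut)]
  · by_cases hrs : r = s
    · subst hrs; rw [vv_app_s hst, selMap, if_neg (two_ne_top_of_bot hus)]
    · rw [vv_app hrs hrt]

lemma sel_eq₁ (hst : s ≠ t) (hut : u t = ⊥) :
    selMap x y (Function.update u s ⊤) = vv (selMap x y u) s t (y s) (x t) := by
  funext r
  by_cases hrt : r = t
  · subst hrt
    rw [vv_app_t, selMap, Function.update_of_ne (Ne.symm hst), if_neg (two_ne_top_of_bot hut)]
  · by_cases hrs : r = s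
    · subst hrs; rw [vv_app_s hst, selMap, Function.update_self, if_pos rfl]
    · rw [vv_app hrs hrt, selMap, selMap, Function.update_of_ne hrs]

lemma sel_eq₂ (hst : s ≠ t) (hus : u s = ⊥) :
    selMap x y (Function.update u t ⊤) = vv (selMap x y u) s t (x s) (y t) := by
  funext r
  by_cases hrt : r = t
  · subst hrt; rw [vv_app_t, selMap, Function.update_self, if_pos rfl]
  · by_cases hrs : r = s
    · subst hrs
      rw [vv_app_s hst, selMap, Function.update_of_ne hst, if_neg (two_ne_top_of_bot hus)]
    · rw [vv_app hrs hrt, selMap, selMap, Function.update_of_ne hrt]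

lemma sel_eq₃ (hst : s ≠ t) :
    selMap x y (Function.update (Function.update u s ⊤) t ⊤)
      = vv (selMap x y u) s t (y s) (y t) := by
  funext r
  by_cases hrt : r = t
  · subst hrt; rw [vv_app_t, selMap, Function.update_self, if_pos rfl]
  · by_cases hrs : r = s
    · subst hrs
      rw [vv_app_s hst, selMap, Function.update_of_ne hrt, Function.update_self, if_pos rfl]
    · rw [vv_app hrs hrt, selMap, selMap, Function.update_of_ne hrt, Function.update_of_ne hrs]

end SelEq

/-- Condition (2) implies the square condition `Sq0`. -/
lemma cube_to_sq0
    (H : ∀ (y : S → Vert a) (hy : ∀ s, 0 < y s),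
      IsStronglyCocartesianCube (restrictedCube X (fun _ => 0) y (fun s => (hy s).le))) :
    Sq0 X := by
  intro c s t hst p q hp hq h1 h2 h3 h4
  classical
  set y : S → Vert a := fun r => if r = s then p else if r = t then q else
    if c r = 0 then p else c r with hydef
  have hy : ∀ r, 0 < y r := by
    intro r
    rw [hydef]
    dsimp only
    split_ifs with hh1 hh2 hh3
    · exact hp
    · exact hq
    · exact hp
    · exact vpos hh3
  set u : S → Two := fun r => if r = s then ⊥ else if r = t then ⊥ else
    if c r = 0 then ⊥ else ⊤ with hudef
  have hus : u s = ⊥ := by rw [hudef]; simp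
  have hut : u t = ⊥ := by rw [hudef]; dsimp only; rw [if_neg (Ne.symm hst), if_pos rfl]
  have key := H y hy u s t hst hus hut
  have hcr : ∀ r, r ≠ s → r ≠ t → selMap (fun _ => (0:Vert a)) y u r = c r := by
    intro r hrs hrt
    rw [selMap, hudef, hydef]
    dsimp only
    simp only [if_neg hrs, if_neg hrt]
    by_cases hc : c r = 0
    · rw [if_pos hc, if_neg (two_ne_top_of_bot rfl), hc]
    · rw [if_neg hc, if_pos rfl, if_neg hc]
  have hxs : selMap (fun _ => (0:Vert a)) y u s = 0 := by
    rw [selMap, hus, if_neg (two_ne_top_of_bot rfl)]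
  have hxt : selMap (fun _ => (0:Vert a)) y u t = 0 := by
    rw [selMap, hut, if_neg (two_ne_top_of_bot rfl)]
  have hys : y s = p := by rw [hydef]; simp
  have hyt : y t = q := by rw [hydef]; dsimp only; rw [if_neg (Ne.symm hst), if_pos rfl]
  have evv : ∀ i j : Vert a, vv (selMap (fun _ => (0:Vert a)) y u) s t i j = vv c s t i j := by
    intro i j
    funext r
    by_cases hrt : r = t
    · subst hrt; rw [vv_app_t, vv_app_t]
    · by_cases hrs : r = s
      · subst hrs; rw [vv_app_s hst, vv_app_s hst]
      · rw [vv_app hrs hrt, vv_app hrs hrt, hcr r hrs hrt]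
  have e₀ : selMap (fun _ => (0:Vert a)) y u = vv c s t 0 0 := by
    rw [sel_eq₀ _ y u hst hus hut]; exact evv 0 0
  have e₁ : selMap (fun _ => (0:Vert a)) y (Function.update u s ⊤) = vv c s t p 0 := by
    rw [sel_eq₁ _ y u hst hut, hys]; exact evv p 0
  have e₂ : selMap (fun _ => (0:Vert a)) y (Function.update u t ⊤) = vv c s t 0 q := by
    rw [sel_eq₂ _ y u hst hus, hyt]; exact evv 0 q
  have e₃ : selMap (fun _ => (0:Vert a)) y (Function.update (Function.update u s ⊤) t ⊤)
      = vv c s t p q := by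
    rw [sel_eq₃ _ y u hst, hys, hyt]; exact evv p q
  exact pushout_ext X e₀ e₁ e₂ e₃ key

/-- The square condition `SqA` implies condition (3). -/
lemma sqA_to_cube (hS : SqA X) :
    ∀ (x y : S → Vert a) (hlt : ∀ s, x s < y s),
      IsStronglyCocartesianCube (restrictedCube X x y (fun s => (hlt s).le)) := by
  intro x y hlt u s t hst hus hut
  have key := hS (selMap x y u) s t hst (x s) (y s) (x t) (y t) (hlt s) (hlt t)
    (vv_le hst (hlt s).le le_rfl) (vv_le hst le_rfl (hlt t).le)
    (vv_le hst le_rfl (hlt t).le) (vv_le hst (hlt s).le le_rfl)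
  exact pushout_ext X (sel_eq₀ x y u hst hus hut).symm (sel_eq₁ x y u hst hut).symm
    (sel_eq₂ x y u hst hus).symm (sel_eq₃ x y u hst).symm key

/-- Condition (3) implies the square condition `SqA`. -/
lemma cube3_to_sqA
    (H : ∀ (x y : S → Vert a) (hlt : ∀ s, x s < y s),
      IsStronglyCocartesianCube (restrictedCube X x y (fun s => (hlt s).le))) :
    SqA X := by
  intro c s t hst i p j q hip hjq h1 h2 h3 h4
  classical
  set x : S → Vert a := fun r => if r = s then i else if r = t then j else 0 with hxdef
  set y : S → Vert a := fun r => if r = s then p else if r = t then q else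
    if c r = 0 then p else c r with hydef
  have hp0 : (0:Vert a) < p := lt_of_le_of_lt (vzero_le i) hip
  have hlt : ∀ r, x r < y r := by
    intro r
    rw [hxdef, hydef]
    dsimp only
    split_ifs with hh1 hh2 hh3
    · exact hip
    · exact hjq
    · exact hp0
    · exact vpos hh3
  set u : S → Two := fun r => if r = s then ⊥ else if r = t then ⊥ else
    if c r = 0 then ⊥ else ⊤ with hudef
  have hus : u s = ⊥ := by rw [hudef]; simp
  have hut : u t = ⊥ := by rw [hudef]; dsimp only; rw [if_neg (Ne.symm hst), if_pos rfl]
  have key := H x y hlt u s t hst hus hut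
  have hcr : ∀ r, r ≠ s → r ≠ t → selMap x y u r = c r := by
    intro r hrs hrt
    rw [selMap, hudef, hxdef, hydef]
    dsimp only
    simp only [if_neg hrs, if_neg hrt]
    by_cases hc : c r = 0
    · rw [if_pos hc, if_neg (two_ne_top_of_bot rfl), hc]
    · rw [if_neg hc, if_pos rfl, if_neg hc]
  have hxs : x s = i := by rw [hxdef]; simp
  have hxt : x t = j := by rw [hxdef]; dsimp only; rw [if_neg (Ne.symm hst), if_pos rfl]
  have hys : y s = p := by rw [hydef]; simp
  have hyt : y t = q := by rw [hydef]; dsimp only; rw [if_neg (Ne.symm hst), if_pos rfl]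
  have evv : ∀ i' j' : Vert a, vv (selMap x y u) s t i' j' = vv c s t i' j' := by
    intro i' j'
    funext r
    by_cases hrt : r = t
    · subst hrt; rw [vv_app_t, vv_app_t]
    · by_cases hrs : r = s
      · subst hrs; rw [vv_app_s hst, vv_app_s hst]
      · rw [vv_app hrs hrt, vv_app hrs hrt, hcr r hrs hrt]
  have e₀ : selMap x y u = vv c s t i j := by
    rw [sel_eq₀ x y u hst hus hut, hxs, hxt, evv]
  have e₁ : selMap x y (Function.update u s ⊤) = vv c s t p j := by
    rw [sel_eq₁ x y u hst hut, hys, hxt, evv]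
  have e₂ : selMap x y (Function.update u t ⊤) = vv c s t i q := by
    rw [sel_eq₂ x y u hst hus, hxs, hyt, evv]
  have e₃ : selMap x y (Function.update (Function.update u s ⊤) t ⊤) = vv c s t p q := by
    rw [sel_eq₃ x y u hst, hys, hyt, evv]
  exact pushout_ext X e₀ e₁ e₂ e₃ key

/-! ### Kan extension setup -/

instance : Fintype (Vert a) := inferInstanceAs (Fintype (Fin (a + 1)))

abbrev Pred : (S → Vert a) → Prop := fun g => ∀ s t : S, g s ≠ 0 → g t ≠ 0 → s = t

instance : DecidablePred (Pred (S := S) (a := a)) := fun _ => by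
  unfold Pred; infer_instance

instance (A B : S → Vert a) : Decidable (A ≤ B) :=
  decidable_of_iff (∀ s, A s ≤ B s) Iff.rfl

abbrev inc : ObjectProperty.FullSubcategory (Pred (S := S) (a := a)) ⥤ (S → Vert a) :=
  ObjectProperty.ι _

instance : Fintype (ObjectProperty.FullSubcategory (Pred (S := S) (a := a))) :=
  Fintype.ofEquiv {g : S → Vert a // Pred g}
    ⟨fun g => ⟨g.1, g.2⟩, fun g => ⟨g.1, g.2⟩, fun _ => rfl, fun _ => rfl⟩

instance : DecidableEq (ObjectProperty.FullSubcategory (Pred (S := S) (a := a))) := fun A B =>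
  decidable_of_iff (A.obj = B.obj)
    ⟨fun h => by cases A; cases B; cases h; rfl, fun h => congrArg ObjectProperty.FullSubcategory.obj h⟩

noncomputable instance fintypeCSA (g : S → Vert a) :
    Fintype (CostructuredArrow (inc (S := S) (a := a)) g) :=
  Fintype.ofInjective (fun j => j.left) (fun j j' h => by
    obtain ⟨jl, ⟨⟨⟩⟩, jh⟩ := j
    obtain ⟨j'l, ⟨⟨⟩⟩, j'h⟩ := j'
    dsimp at h
    subst h
    congr 1
    exact Subsingleton.elim _ _)

instance subsingletonCSAHom (g : S → Vert a)
    (j j' : CostructuredArrow (inc (S := S) (a := a)) g) : Subsingleton (j ⟶ j') :=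
  ⟨fun f f' => by
    apply CommaMorphism.ext
    · exact InducedCategory.hom_ext (Subsingleton.elim _ _)
    · exact Subsingleton.elim _ _⟩

noncomputable instance fintypeCSAHom (g : S → Vert a)
    (j j' : CostructuredArrow (inc (S := S) (a := a)) g) : Fintype (j ⟶ j') := by
  classical
  by_cases h : Nonempty (j ⟶ j')
  · exact Fintype.ofSubsingleton h.some
  · rw [not_nonempty_iff] at h
    exact Fintype.ofIsEmpty

noncomputable instance finCatCSA (g : S → Vert a) :
    FinCategory (CostructuredArrow (inc (S := S) (a := a)) g) := {}

set_option synthInstance.maxHeartbeats 1000000 in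
instance hasPLKE [HasFiniteColimits C] :
    Functor.HasPointwiseLeftKanExtension (inc (S := S) (a := a)) (inc ⋙ X) :=
  fun _ => inferInstance

/-- The relevant left extension. -/
@[reducible] noncomputable def Ext : Functor.LeftExtension (inc (S := S) (a := a)) (inc ⋙ X) :=
  Functor.LeftExtension.mk X (𝟙 (inc ⋙ X))

/-- Objects of the costructured arrow category. -/
def ob (g h : S → Vert a) (hP : Pred h) (hle : h ≤ g) :
    CostructuredArrow (inc (S := S) (a := a)) g :=
  CostructuredArrow.mk (Y := (⟨h, hP⟩ : ObjectProperty.FullSubcategory _))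
    (show inc.obj ⟨h, hP⟩ ⟶ g from homOfLE hle)

/-- Morphisms of the costructured arrow category. -/
def mor {g h h' : S → Vert a} {hP : Pred h} {hP' : Pred h'} {l : h ≤ g} {l' : h' ≤ g}
    (hhl : h ≤ h') : ob g h hP l ⟶ ob g h' hP' l' :=
  CostructuredArrow.homMk (ObjectProperty.homMk (homOfLE hhl)) (Subsingleton.elim _ _)

lemma coconeAt_app (g : S → Vert a) (j : CostructuredArrow (inc (S := S) (a := a)) g) :
    ((Ext X).coconeAt g).ι.app j = X.map j.hom := by
  dsimp [Ext, Functor.LeftExtension.coconeAt]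
  exact Category.id_comp _

/-! ### support bookkeeping -/

def zf : S → Vert a := fun _ => 0

def dl (t : S) (k : Vert a) : S → Vert a := Function.update zf t k

def up0 (g : S → Vert a) (t : S) : S → Vert a := Function.update g t 0

lemma pred_zf : Pred (zf (S := S) (a := a)) := fun _ _ hs _ => absurd rfl hs

lemma dl_app_ne {t r : S} (hr : r ≠ t) (k : Vert a) : dl t k r = 0 := by
  show Function.update zf t k r = 0
  rw [Function.update_of_ne hr]
  rfl

lemma dl_app_self (t : S) (k : Vert a) : dl t k t = k := by
  show Function.update zf t k t = k
  rw [Function.update_self]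

lemma pred_dl (t : S) (k : Vert a) : Pred (dl (S := S) t k) := by
  intro s s' hs hs'
  have h1 : s = t := by by_contra hco; exact hs (dl_app_ne hco k)
  have h2 : s' = t := by by_contra hco; exact hs' (dl_app_ne hco k)
  rw [h1, h2]

lemma pred_support {h : S → Vert a} (hP : Pred h) {s : S} (hs : h s ≠ 0) {r : S} (hr : r ≠ s) :
    h r = 0 := by
  by_contra hc
  exact hr (hP r s hc hs)

lemma zf_le (g : S → Vert a) : zf ≤ g := fun _ => vzero_le _

lemma up0_le (g : S → Vert a) (t : S) : up0 g t ≤ g := by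
  intro r
  by_cases hr : r = t
  · subst hr; rw [up0, Function.update_self]; exact vzero_le _
  · rw [up0, Function.update_of_ne hr]

lemma up0_app_self (g : S → Vert a) (t : S) : up0 g t t = 0 := Function.update_self t 0 g

lemma up0_app_ne (g : S → Vert a) {t r : S} (hr : r ≠ t) : up0 g t r = g r :=
  Function.update_of_ne hr 0 g

lemma dl_le {g : S → Vert a} (t : S) {k : Vert a} (hk : k ≤ g t) : dl t k ≤ g := by
  intro r
  by_cases hr : r = t
  · subst hr; rw [dl_app_self]; exact hk
  · rw [dl_app_ne hr]; exact vzero_le _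

lemma le_up0 {h g : S → Vert a} {t : S} (hle : h ≤ g) (h0 : h t = 0) : h ≤ up0 g t := by
  intro r
  by_cases hr : r = t
  · subst hr; rw [up0, Function.update_self, h0]
  · rw [up0, Function.update_of_ne hr]; exact hle r

lemma le_dl {h : S → Vert a} {t : S} {k : Vert a} (hsupp : ∀ r, r ≠ t → h r = 0)
    (hk : h t ≤ k) : h ≤ dl t k := by
  intro r
  by_cases hr : r = t
  · subst hr; rw [dl_app_self]; exact hk
  · rw [dl_app_ne hr, hsupp r hr]

def suppCard (g : S → Vert a) : ℕ := (Finset.univ.filter (fun r => g r ≠ 0)).card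

lemma suppCard_update_lt {g : S → Vert a} {s : S} (hs : g s ≠ 0) :
    suppCard (Function.update g s 0) < suppCard g := by
  apply Finset.card_lt_card
  constructor
  · intro r hr
    simp only [Finset.mem_filter, Finset.mem_univ, true_and] at hr ⊢
    by_cases hrs : r = s
    · subst hrs; rw [Function.update_self] at hr; exact absurd rfl hr
    · rwa [Function.update_of_ne hrs] at hr
  · intro hsub
    have hmem : s ∈ Finset.univ.filter (fun r => g r ≠ 0) := by
      simp only [Finset.mem_filter, Finset.mem_univ, true_and]; exact hs
    have := hsub hmem
    simp only [Finset.mem_filter, Finset.mem_univ, true_and, Function.update_self] at this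
    exact this rfl

/-! ### The star pushout -/

lemma star_pushout (hS : SqA X) :
    ∀ (n : ℕ) (g : S → Vert a), suppCard g ≤ n → ∀ (t : S) (k : Vert a), g t = k → k ≠ 0 →
    ∀ (h1 : zf ≤ dl t k) (h2 : zf ≤ up0 g t) (h3 : dl t k ≤ g) (h4 : up0 g t ≤ g),
    IsPushout (X.map (homOfLE h1)) (X.map (homOfLE h2)) (X.map (homOfLE h3))
      (X.map (homOfLE h4)) := by
  intro n
  induction n with
  | zero =>
    intro g hg t k hk hkne h1 h2 h3 h4
    exfalso
    have hmem : t ∈ Finset.univ.filter (fun r => g r ≠ 0) := by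
      simp only [Finset.mem_filter, Finset.mem_univ, true_and]
      rw [hk]; exact hkne
    rw [Finset.card_eq_zero.mp (Nat.le_zero.mp hg)] at hmem
    exact Finset.notMem_empty t hmem
  | succ n IH =>
    intro g hg t k hk hkne h1 h2 h3 h4
    by_cases hex : ∃ s, s ≠ t ∧ g s ≠ 0
    · obtain ⟨s, hst, hs⟩ := hex
      have hsupp' : suppCard (Function.update g s 0) ≤ n :=
        Nat.lt_succ_iff.mp (lt_of_lt_of_le (suppCard_update_lt hs) hg)
      have hk' : Function.update g s 0 t = k := by
        rw [Function.update_of_ne (Ne.symm hst)]; exact hk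
      have A := IH (Function.update g s 0) hsupp' t k hk' hkne (zf_le _) (zf_le _)
        (dl_le t (le_of_eq hk'.symm)) (up0_le _ t)
      -- the square from SqA
      have hgs : (0:Vert a) < g s := vpos hs
      have hk0 : (0:Vert a) < k := vpos hkne
      have B := hS g s t hst 0 (g s) 0 k hgs hk0
        (vv_le hst hgs.le le_rfl) (vv_le hst le_rfl hk0.le)
        (vv_le hst le_rfl hk0.le) (vv_le hst hgs.le le_rfl)
      have eB0 : vv g s t 0 0 = up0 (Function.update g s 0) t := rfl
      have eB1 : vv g s t (g s) 0 = up0 g t := by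
        funext r
        by_cases hrt : r = t
        · subst hrt; rw [vv_app_t, up0_app_self]
        · by_cases hrs : r = s
          · subst hrs; rw [vv_app_s hst, up0_app_ne g hst]
          · rw [vv_app hrs hrt, up0_app_ne g hrt]
      have eB2 : vv g s t 0 k = Function.update g s 0 := by
        funext r
        by_cases hrt : r = t
        · subst hrt; rw [vv_app_t, hk']
        · by_cases hrs : r = s
          · subst hrs; rw [vv_app_s hst, Function.update_self]
          · rw [vv_app hrs hrt, Function.update_of_ne hrs]
      have eB3 : vv g s t (g s) k = g := by
        funext r
        by_cases hrt : r = t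
        · subst hrt; rw [vv_app_t, hk]
        · by_cases hrs : r = s
          · subst hrs; rw [vv_app_s hst]
          · rw [vv_app hrs hrt]
      have lB4 : Function.update g s 0 ≤ g := by
        intro r
        by_cases hrs : r = s
        · subst hrs; rw [Function.update_self]; exact vzero_le _
        · rw [Function.update_of_ne hrs]
      have lB1 : up0 (Function.update g s 0) t ≤ up0 g t := by
        intro r
        by_cases hrt : r = t
        · subst hrt; rw [up0_app_self, up0_app_self]
        · rw [up0_app_ne _ hrt, up0_app_ne _ hrt]; exact lB4 r
      have lB2 : up0 (Function.update g s 0) t ≤ Function.update g s 0 := up0_le _ t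
      have lB3 : up0 g t ≤ g := h4
      have B' : IsPushout (X.map (homOfLE lB1)) (X.map (homOfLE lB2)) (X.map (homOfLE lB3))
          (X.map (homOfLE lB4)) := pushout_ext X eB0 eB1 eB2 eB3 B
      have P := A.paste_vert B'.flip
      rw [map_comp', map_comp'] at P
      exact P
    · push_neg at hex
      have hzero : ∀ r, r ≠ t → g r = 0 := fun r hr => hex r hr
      haveI : IsIso (X.map (homOfLE h2)) := by
        refine isIso_map X h2 ?_
        intro r
        by_cases hrt : r = t
        · subst hrt; rw [up0_app_self]; exact le_rfl
        · rw [up0_app_ne g hrt, hzero r hrt]; exact le_rfl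
      haveI : IsIso (X.map (homOfLE h3)) := by
        refine isIso_map X h3 ?_
        intro r
        by_cases hrt : r = t
        · subst hrt; rw [dl_app_self, hk]
        · rw [hzero r hrt]; exact vzero_le _
      exact IsPushout.of_vert_isIso ⟨map_sq X h1 h3 h2 h4⟩

/-! ### Pointwise colimits from the square condition -/

noncomputable def colimitPred (g : S → Vert a) (hP : Pred g) :
    IsColimit ((Ext X).coconeAt g) where
  desc c := c.ι.app (ob g g hP le_rfl)
  fac c j := by
    have f : j ⟶ ob g g hP le_rfl :=
      CostructuredArrow.homMk (ObjectProperty.homMk (homOfLE (leOfHom j.hom))) (Subsingleton.elim _ _)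
    have hnat := c.w f
    rw [coconeAt_app]
    refine Eq.trans ?_ hnat
    congr 1
    exact congrArg X.map (Subsingleton.elim _ _)
  uniq c m hm := by
    have h0 := hm (ob g g hP le_rfl)
    rw [coconeAt_app] at h0
    have hid : X.map ((ob g g hP le_rfl).hom) = 𝟙 (X.obj g) := by
      rw [show ((ob g g hP le_rfl).hom) = 𝟙 g from Subsingleton.elim _ _]
      exact X.map_id g
    rw [hid] at h0
    exact (Category.id_comp m).symm.trans h0

/-- Restriction of a cocone over the star of `g` to the star of `up0 g t`. -/
noncomputable def resCocone (g : S → Vert a) (t : S)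
    (c : Cocone (CostructuredArrow.proj (inc (S := S) (a := a)) g ⋙ inc ⋙ X)) :
    Cocone (CostructuredArrow.proj (inc (S := S) (a := a)) (up0 g t) ⋙ inc ⋙ X) where
  pt := c.pt
  ι :=
    { app := fun j => c.ι.app (ob g j.left.obj j.left.property
        ((leOfHom j.hom).trans (up0_le g t)))
      naturality := fun j j' f => by
        dsimp
        erw [Category.comp_id]
        exact c.w (mor (leOfHom f.left.hom)) }

lemma colimitAt (hS : SqA X) : ∀ (n : ℕ) (g : S → Vert a), suppCard g ≤ n →
    Nonempty (IsColimit ((Ext X).coconeAt g)) := by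
  intro n
  induction n with
  | zero =>
    intro g hg
    have hzero : ∀ r, g r = 0 := by
      intro r
      by_contra hr
      have hmem : r ∈ Finset.univ.filter (fun r => g r ≠ 0) := by
        simp only [Finset.mem_filter, Finset.mem_univ, true_and]; exact hr
      rw [Finset.card_eq_zero.mp (Nat.le_zero.mp hg)] at hmem
      exact Finset.notMem_empty r hmem
    exact ⟨colimitPred X g (fun s t hs _ => absurd (hzero s) hs)⟩
  | succ n IH =>
    intro g hg
    by_cases hP : Pred g
    · exact ⟨colimitPred X g hP⟩
    · unfold Pred at hP
      push_neg at hP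
      obtain ⟨s, t, hs, ht, hst⟩ := hP
      have hg' : suppCard (up0 g t) ≤ n :=
        Nat.lt_succ_iff.mp (lt_of_lt_of_le (suppCard_update_lt ht) hg)
      obtain ⟨hcol'⟩ := IH (up0 g t) hg'
      have star := star_pushout X hS (n+1) g hg t (g t) rfl ht (zf_le _) (zf_le _)
        (dl_le t le_rfl) (up0_le g t)
      have hPδ : Pred (dl (S := S) t (g t)) := pred_dl t (g t)
      have wcomp : ∀ c : Cocone (CostructuredArrow.proj (inc (S := S) (a := a)) g ⋙ inc ⋙ X),
          X.map (homOfLE (zf_le (dl t (g t))))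
              ≫ c.ι.app (ob g (dl t (g t)) hPδ (dl_le t le_rfl))
            = X.map (homOfLE (zf_le (up0 g t))) ≫ hcol'.desc (resCocone X g t c) := by
        intro c
        have l := c.w (mor (zf_le (dl t (g t))) :
          ob g zf pred_zf (zf_le g) ⟶ ob g (dl t (g t)) hPδ (dl_le t le_rfl))
        have r := hcol'.fac (resCocone X g t c) (ob (up0 g t) zf pred_zf (zf_le _))
        rw [coconeAt_app] at r
        exact l.trans r.symm
      refine ⟨{ desc := fun c => star.desc (c.ι.app (ob g (dl t (g t)) hPδ (dl_le t le_rfl))) (hcol'.desc (resCocone X g t c)) (wcomp c), fac := ?_, uniq := ?_ }⟩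
      · -- fac
        intro c j
        rw [coconeAt_app]
        by_cases h0 : j.left.obj t = 0
        · have l1 : j.left.obj ≤ up0 g t := le_up0 (leOfHom j.hom) h0
          have e1 : X.map j.hom
              = X.map (homOfLE l1) ≫ X.map (homOfLE (up0_le g t)) := by
            rw [map_comp']
            exact congrArg X.map (Subsingleton.elim _ _)
          erw [e1, Category.assoc, star.inr_desc]
          have r := hcol'.fac (resCocone X g t c) (ob (up0 g t) j.left.obj j.left.property l1)
          rw [coconeAt_app] at r
          exact r
        · have hsupp : ∀ r, r ≠ t → j.left.obj r = 0 :=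
            fun r hr => pred_support j.left.property h0 hr
          have l2 : j.left.obj ≤ dl t (g t) := le_dl hsupp (leOfHom j.hom t)
          have e2 : X.map j.hom
              = X.map (homOfLE l2) ≫ X.map (homOfLE (dl_le t le_rfl)) := by
            rw [map_comp']
            exact congrArg X.map (Subsingleton.elim _ _)
          erw [e2, Category.assoc, star.inl_desc]
          exact c.w (mor l2)
      · -- uniqueness
        intro c m hm
        apply star.hom_ext
        · erw [star.inl_desc]
          have h0 := hm (ob g (dl t (g t)) hPδ (dl_le t le_rfl))
          rw [coconeAt_app] at h0
          exact h0
        · erw [star.inr_desc]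
          apply hcol'.hom_ext
          intro j'
          erw [hcol'.fac (resCocone X g t c) j']
          rw [coconeAt_app]
          have hj : X.map j'.hom = X.map (homOfLE (leOfHom j'.hom)) := rfl
          erw [hj, ← Category.assoc, map_comp' X (leOfHom j'.hom) (up0_le g t)]
          have h1 := hm (ob g j'.left.obj j'.left.property
            ((leOfHom j'.hom).trans (up0_le g t)))
          rw [coconeAt_app] at h1
          exact h1

/-! ### From pointwise colimits to the square condition -/

lemma map_assoc_comp {A B D : S → Vert a} (l1 : A ≤ B) (l2 : B ≤ D) {W : C}
    (m : X.obj D ⟶ W) (l3 : A ≤ D) :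
    X.map (homOfLE l1) ≫ X.map (homOfLE l2) ≫ m = X.map (homOfLE l3) ≫ m := by
  rw [← Category.assoc, map_comp']

lemma le_vv_right {c : S → Vert a} {s t : S} (hst : s ≠ t) {p q : Vert a} {h : S → Vert a}
    (hle : h ≤ vv c s t p q) (h0 : h s = 0) : h ≤ vv c s t 0 q := by
  intro r
  by_cases hrt : r = t
  · subst hrt; rw [vv_app_t]; exact le_trans (hle r) (le_of_eq (vv_app_t c s r p q))
  · by_cases hrs : r = s
    · subst hrs; rw [vv_app_s hst, h0]
    · rw [vv_app hrs hrt]; exact le_trans (hle r) (le_of_eq (vv_app hrs hrt p q))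

lemma le_vv_left {c : S → Vert a} {s t : S} (hst : s ≠ t) {p q : Vert a} {h : S → Vert a}
    (hle : h ≤ vv c s t p q) (hsupp : ∀ r, r ≠ s → h r = 0) : h ≤ vv c s t p 0 := by
  intro r
  by_cases hrs : r = s
  · subst hrs
    rw [vv_app_s hst]
    exact le_trans (hle r) (le_of_eq (vv_app_s hst p q))
  · rw [hsupp r hrs]; exact vzero_le _

lemma le_vv_zero {c : S → Vert a} {s t : S} {p q : Vert a} {h : S → Vert a}
    (hz : ∀ r, h r = 0) : h ≤ vv c s t p q := by
  intro r; rw [hz r]; exact vzero_le _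

section SpanCocone

variable {c : S → Vert a} {s t : S} (hst : s ≠ t) {p q : Vert a}
  {l1 : vv c s t 0 0 ≤ vv c s t p 0} {l2 : vv c s t 0 0 ≤ vv c s t 0 q}
  (sc : PushoutCocone (X.map (homOfLE l1)) (X.map (homOfLE l2)))

/-- The leg of the auxiliary cocone over the star of the top vertex. -/
noncomputable def spanLeg (j : CostructuredArrow (inc (S := S) (a := a)) (vv c s t p q)) :
    X.obj (inc.obj j.left) ⟶ sc.pt :=
  if h0 : j.left.obj s = 0 then
    X.map (homOfLE (le_vv_right hst (leOfHom j.hom) h0)) ≫ sc.inr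
  else
    X.map (homOfLE (le_vv_left hst (leOfHom j.hom)
      (fun r hr => pred_support j.left.property h0 hr))) ≫ sc.inl

lemma spanLeg_pos {j : CostructuredArrow (inc (S := S) (a := a)) (vv c s t p q)}
    (h0 : j.left.obj s = 0) :
    spanLeg X hst sc j = X.map (homOfLE (le_vv_right hst (leOfHom j.hom) h0)) ≫ sc.inr :=
  dif_pos h0

lemma spanLeg_neg {j : CostructuredArrow (inc (S := S) (a := a)) (vv c s t p q)}
    (h0 : ¬ (j.left.obj s = 0)) :
    spanLeg X hst sc j = X.map (homOfLE (le_vv_left hst (leOfHom j.hom)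
      (fun r hr => pred_support j.left.property h0 hr))) ≫ sc.inl :=
  dif_neg h0

/-- The auxiliary cocone over the star of the top vertex of a square. -/
noncomputable def spanCocone :
    Cocone (CostructuredArrow.proj (inc (S := S) (a := a)) (vv c s t p q) ⋙ inc ⋙ X) where
  pt := sc.pt
  ι :=
    { app := spanLeg X hst sc
      naturality := by
        intro j j' f
        dsimp
        erw [Category.comp_id]
        have hff : (X.map f.left.hom : X.obj (inc.obj j.left) ⟶ X.obj (inc.obj j'.left))
            = X.map (homOfLE (leOfHom f.left.hom)) := rfl
        by_cases hj' : j'.left.obj s = 0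
        · have hj : j.left.obj s = 0 := vle_zero (by
            rw [← hj']; exact leOfHom f.left.hom s)
          erw [spanLeg_pos X hst sc hj', spanLeg_pos X hst sc hj, hff,
            map_assoc_comp X (leOfHom f.left.hom) _ sc.inr
              (le_vv_right hst (leOfHom j.hom) hj)]
        · by_cases hj : j.left.obj s = 0
          · -- mixed case : j is the zero function
            have hallz : ∀ r, j.left.obj r = 0 := by
              intro r
              by_cases hrs : r = s
              · subst hrs; exact hj
              · refine vle_zero ?_
                rw [← pred_support j'.left.property hj' hrs]
                exact leOfHom f.left.hom r
            have l0 : j.left.obj ≤ vv c s t 0 0 := le_vv_zero hallz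
            erw [spanLeg_pos X hst sc hj, spanLeg_neg X hst sc hj', hff,
              map_assoc_comp X (leOfHom f.left.hom) _ sc.inl
                (le_trans l0 l1),
              ← map_assoc_comp X l0 l1 sc.inl (le_trans l0 l1),
              sc.condition,
              map_assoc_comp X l0 l2 sc.inr
                (le_vv_right hst (leOfHom j.hom) hj)]
          · erw [spanLeg_neg X hst sc hj', spanLeg_neg X hst sc hj, hff,
              map_assoc_comp X (leOfHom f.left.hom) _ sc.inl
                (le_vv_left hst (leOfHom j.hom)
                  (fun r hr => pred_support j.left.property hj hr))] }

lemma spanCocone_app (j : CostructuredArrow (inc (S := S) (a := a)) (vv c s t p q)) :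
    (spanCocone X hst sc).ι.app j = spanLeg X hst sc j := rfl

end SpanCocone

lemma pointwise_to_sq0 (pc : ∀ g : S → Vert a, IsColimit ((Ext X).coconeAt g)) :
    Sq0 X := by
  intro c s t hst p q hp hq h1 h2 h3 h4
  refine IsPushout.of_isColimit' ⟨map_sq X h1 h3 h2 h4⟩ ?_
  refine PushoutCocone.IsColimit.mk _
    (fun sc => (pc (vv c s t p q)).desc (spanCocone (l1 := h1) (l2 := h2) X hst sc))
    ?_ ?_ ?_
  · -- fac_left : X.map h3 ≫ desc = sc.inl
    intro sc
    apply (pc (vv c s t p 0)).hom_ext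
    intro j
    rw [coconeAt_app]
    have hjle : j.left.obj ≤ vv c s t p 0 := leOfHom j.hom
    have hT : j.left.obj ≤ vv c s t p q := le_trans hjle h3
    erw [show X.map j.hom = X.map (homOfLE hjle) from rfl,
      map_assoc_comp X hjle h3 _ hT]
    have hf := (pc (vv c s t p q)).fac (spanCocone (l1 := h1) (l2 := h2) X hst sc)
      (ob (vv c s t p q) j.left.obj j.left.property hT)
    rw [coconeAt_app, spanCocone_app] at hf
    refine hf.trans ?_
    by_cases h0 : j.left.obj s = 0
    · rw [spanLeg_pos X hst sc (j := ob (vv c s t p q) j.left.obj j.left.property hT) h0]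
      have h0t : j.left.obj t = 0 :=
        vle_zero (le_trans (hjle t) (le_of_eq (vv_app_t c s t p 0)))
      have l0 : j.left.obj ≤ vv c s t 0 0 := by
        intro r
        by_cases hrt : r = t
        · subst hrt; rw [vv_app_t]; exact le_of_eq h0t
        · by_cases hrs : r = s
          · subst hrs; rw [vv_app_s hst]; exact le_of_eq h0
          · rw [vv_app hrs hrt]
            exact le_trans (hjle r) (le_of_eq (vv_app hrs hrt p 0))
      erw [← map_assoc_comp X l0 h2 sc.inr (le_vv_right hst
          (leOfHom (ob (vv c s t p q) j.left.obj j.left.property hT).hom) h0),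
        ← sc.condition, map_assoc_comp X l0 h1 sc.inl hjle]
      rfl
    · rw [spanLeg_neg X hst sc (j := ob (vv c s t p q) j.left.obj j.left.property hT) h0]
      rfl
  · -- fac_right : X.map h4 ≫ desc = sc.inr
    intro sc
    apply (pc (vv c s t 0 q)).hom_ext
    intro j
    rw [coconeAt_app]
    have hjle : j.left.obj ≤ vv c s t 0 q := leOfHom j.hom
    have hT : j.left.obj ≤ vv c s t p q := le_trans hjle h4
    erw [show X.map j.hom = X.map (homOfLE hjle) from rfl,
      map_assoc_comp X hjle h4 _ hT]
    have hf := (pc (vv c s t p q)).fac (spanCocone (l1 := h1) (l2 := h2) X hst sc)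
      (ob (vv c s t p q) j.left.obj j.left.property hT)
    rw [coconeAt_app, spanCocone_app] at hf
    refine hf.trans ?_
    have h0 : j.left.obj s = 0 :=
      vle_zero (le_trans (hjle s) (le_of_eq (vv_app_s hst 0 q)))
    rw [spanLeg_pos X hst sc (j := ob (vv c s t p q) j.left.obj j.left.property hT) h0]
    rfl
  · -- uniqueness
    intro sc m hminl hminr
    apply (pc (vv c s t p q)).hom_ext
    intro j
    have hf := (pc (vv c s t p q)).fac (spanCocone (l1 := h1) (l2 := h2) X hst sc) j
    rw [coconeAt_app, spanCocone_app] at hf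
    rw [coconeAt_app]
    refine Eq.trans ?_ hf.symm
    by_cases h0 : j.left.obj s = 0
    · rw [spanLeg_pos X hst sc h0]
      erw [show X.map j.hom = X.map (homOfLE (leOfHom j.hom)) from rfl,
        ← map_assoc_comp X (le_vv_right hst (leOfHom j.hom) h0) h4 m (leOfHom j.hom),
        hminr]
    · rw [spanLeg_neg X hst sc h0]
      erw [show X.map j.hom = X.map (homOfLE (leOfHom j.hom)) from rfl,
        ← map_assoc_comp X (le_vv_left hst (leOfHom j.hom)
          (fun r hr => pred_support j.left.property h0 hr)) h3 m (leOfHom j.hom),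
        hminl]

/-! ### Kan extension bridges -/

lemma kan_to_sq0 [HasFiniteColimits C]
    (h : X.IsLeftKanExtension (𝟙 ((inc (S := S) (a := a)) ⋙ X))) : Sq0 X := by
  haveI := h
  have pw := Functor.isPointwiseLeftKanExtensionOfIsLeftKanExtension X
    (𝟙 ((inc (S := S) (a := a)) ⋙ X))
  exact pointwise_to_sq0 X (fun g => pw g)

lemma sq0_to_kan [HasFiniteColimits C] (hS : Sq0 X) :
    X.IsLeftKanExtension (𝟙 ((inc (S := S) (a := a)) ⋙ X)) := by
  have hA := sq0_to_sqA X hS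
  have pw : (Ext X).IsPointwiseLeftKanExtension := fun g =>
    Classical.choice (colimitAt X hA (suppCard g) g le_rfl)
  exact pw.isLeftKanExtension

end Stmt11Aux

/-- For a diagram `X : [a]^S → C` (`S` finite, `a ≥ 1`) in a category with finite colimits,
the following are equivalent: (1) `X` is left Kan extended from the subposet of functions
supported on at most one element; (2) for each collection of strictly monotone maps
`f_s : [1] → [a]` with `f_s(0) = 0`, the restricted cube of sidelength 1 is strongly
cocartesian; (3) the same for arbitrary collections of strictly monotone maps `f_s`. -/
theorem stmt11 {S : Type} [Fintype S] [DecidableEq S] {a : ℕ} (ha : 1 ≤ a)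
    [HasFiniteColimits C] (X : (S → Vert a) ⥤ C) :
    ((X.IsLeftKanExtension (𝟙 (ObjectProperty.ι
        (fun g : S → Vert a => ∀ s t : S, g s ≠ 0 → g t ≠ 0 → s = t) ⋙ X))) ↔
      (∀ (y : S → Vert a) (hy : ∀ s, 0 < y s),
        IsStronglyCocartesianCube
          (restrictedCube X (fun _ => 0) y (fun s => (hy s).le)))) ∧
    ((∀ (y : S → Vert a) (hy : ∀ s, 0 < y s),
        IsStronglyCocartesianCube
          (restrictedCube X (fun _ => 0) y (fun s => (hy s).le))) ↔
      (∀ (x y : S → Vert a) (hlt : ∀ s, x s < y s),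
        IsStronglyCocartesianCube (restrictedCube X x y (fun s => (hlt s).le)))) := by
  constructor
  · constructor
    · intro h1
      have hsq := Stmt11Aux.kan_to_sq0 X h1
      have hA := Stmt11Aux.sq0_to_sqA X hsq
      have h3 := Stmt11Aux.sqA_to_cube X hA
      intro y hy
      exact h3 (fun _ => 0) y hy
    · intro h2
      exact Stmt11Aux.sq0_to_kan X (Stmt11Aux.cube_to_sq0 X h2)
  · constructor
    · intro h2
      exact Stmt11Aux.sqA_to_cube X (Stmt11Aux.sq0_to_sqA X (Stmt11Aux.cube_to_sq0 X h2))
    · intro h3 y hy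
      exact h3 (fun _ => 0) y hy
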